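/- Combining the soft-to-hard deviation bound with the loss perturbation bound: if (T^{soft}, B^{soft}) is given and (T^{hard}, B^{hard}) is the hard projection with recomputed barycenters satisfying L(T^{hard}, B^{hard}) ≤ L(T^{hard}, B^{soft}), then L(T^{hard}, B^{hard}) − L(T^{soft}, B^{soft}) ≤ 2((1−α)D_A^q + 2αD_S^q)(1 − 1/k). -/

import Mathlib

open Finset

/-- The semi-relaxed Fused Gromov–Wasserstein loss. -/
noncomputable def srFGWloss {n k : ℕ} {X : Type*} [MetricSpace X]
    (α q : ℝ) (v : Fin n → X)
    (R1 : Fin n → Fin n → ℝ) (R2 : Fin k → Fin k → ℝ)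
    (T : Fin n → Fin k → ℝ) (B : Fin k → X) : ℝ :=
  (1 - α) * ∑ i, ∑ l, dist (v i) (B l) ^ q * T i l
    + α * ∑ i, ∑ j, ∑ l, ∑ m, |R1 i j - R2 l m| ^ q * (T i l * T j m)

private lemma foursum {n k : ℕ} (f g : Fin n → Fin k → ℝ) :
    ∑ i, ∑ j, ∑ l, ∑ m, f i l * g j m = (∑ i, ∑ l, f i l) * (∑ j, ∑ m, g j m) := by
  rw [Finset.sum_mul_sum]
  exact Finset.sum_congr rfl fun i _ => Finset.sum_congr rfl fun j _ =>
    (Finset.sum_mul_sum _ _ _ _).symm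

private lemma foursum' {n k : ℕ} (c : ℝ) (f g : Fin n → Fin k → ℝ) :
    ∑ i, ∑ j, ∑ l, ∑ m, c * (f i l * g j m)
      = c * ((∑ i, ∑ l, f i l) * (∑ j, ∑ m, g j m)) := by
  rw [← foursum f g]
  simp_rw [Finset.mul_sum]

/-- Soft-to-hard loss increase bound:
`L(T^hard,B^hard) − L(T^soft,B^soft) ≤ 2((1−α)D_A^q + 2αD_S^q)(1 − 1/k)`. -/
theorem srFGW_soft_to_hard_loss_bound
    {n k : ℕ} [NeZero n] [NeZero k] {X : Type*} [MetricSpace X]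
    (α q : ℝ) (hα0 : 0 ≤ α) (hα1 : α ≤ 1) (hq : 1 ≤ q)
    (v : Fin n → X) (R1 : Fin n → Fin n → ℝ) (R2 : Fin k → Fin k → ℝ)
    (μ : Fin n → ℝ) (hμ_nonneg : ∀ i, 0 ≤ μ i) (hμ_sum : ∑ i, μ i = 1)
    (Tsoft : Fin n → Fin k → ℝ)
    (hT_nonneg : ∀ i l, 0 ≤ Tsoft i l)
    (hT_row : ∀ i, ∑ l, Tsoft i l = μ i)
    (ℓ : Fin n → Fin k)
    (hℓ : ∀ i, Tsoft i (ℓ i) = univ.sup' univ_nonempty (Tsoft i))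
    (Thard : Fin n → Fin k → ℝ)
    (hThard : ∀ i l, Thard i l = if l = ℓ i then μ i else 0)
    (Bsoft Bhard : Fin k → X)
    (hB_opt : srFGWloss α q v R1 R2 Thard Bhard ≤ srFGWloss α q v R1 R2 Thard Bsoft)
    (DA DS : ℝ)
    (hDA : DA = ⨆ p : Fin n × Fin k, dist (v p.1) (Bsoft p.2))
    (hDS : DS = ⨆ p : (Fin n × Fin n) × (Fin k × Fin k),
      |R1 p.1.1 p.1.2 - R2 p.2.1 p.2.2|) :
    srFGWloss α q v R1 R2 Thard Bhard - srFGWloss α q v R1 R2 Tsoft Bsoft ≤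
      2 * ((1 - α) * DA ^ q + 2 * α * DS ^ q) * (1 - 1 / (k : ℝ)) := by
  have hk0 : (0:ℝ) < k := by exact_mod_cast Nat.pos_of_ne_zero (NeZero.ne k)
  have hq0 : (0:ℝ) ≤ q := by linarith
  -- DA bounds
  have hDAle : ∀ i l, dist (v i) (Bsoft l) ≤ DA := by
    intro i l
    rw [hDA]
    exact le_ciSup (f := fun p : Fin n × Fin k => dist (v p.1) (Bsoft p.2))
      (Set.Finite.bddAbove (Set.finite_range _)) (i, l)
  have hDA0 : 0 ≤ DA := le_trans dist_nonneg (hDAle 0 0)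
  have hDSle : ∀ i j l m, |R1 i j - R2 l m| ≤ DS := by
    intro i j l m
    rw [hDS]
    exact le_ciSup (f := fun p : (Fin n × Fin n) × (Fin k × Fin k) =>
      |R1 p.1.1 p.1.2 - R2 p.2.1 p.2.2|)
      (Set.Finite.bddAbove (Set.finite_range _)) ((i, j), (l, m))
  have hDS0 : 0 ≤ DS := le_trans (abs_nonneg _) (hDSle 0 0 0 0)
  have hDAq0 : 0 ≤ DA ^ q := Real.rpow_nonneg hDA0 q
  have hDSq0 : 0 ≤ DS ^ q := Real.rpow_nonneg hDS0 q
  -- max entry facts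
  have hM : ∀ i, Tsoft i (ℓ i) ≤ μ i := by
    intro i
    rw [← hT_row i]
    exact Finset.single_le_sum (fun l _ => hT_nonneg i l) (mem_univ _)
  have hkM : ∀ i, μ i ≤ k * Tsoft i (ℓ i) := by
    intro i
    rw [← hT_row i]
    calc ∑ l, Tsoft i l ≤ ∑ _l : Fin k, Tsoft i (ℓ i) :=
          Finset.sum_le_sum fun l _ => by rw [hℓ]; exact Finset.le_sup' _ (mem_univ l)
    _ = k * Tsoft i (ℓ i) := by
          simp [Finset.sum_const, Finset.card_univ, nsmul_eq_mul]
  have hTh_nonneg : ∀ i l, 0 ≤ Thard i l := by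
    intro i l; rw [hThard]; split_ifs
    · exact hμ_nonneg i
    · exact le_refl 0
  -- row-wise deviation
  have hrow : ∀ i, ∑ l, |Thard i l - Tsoft i l| = 2 * (μ i - Tsoft i (ℓ i)) := by
    intro i
    have h1 : ∀ l : Fin k, |Thard i l - Tsoft i l|
        = (if l = ℓ i then μ i - 2 * Tsoft i l else 0) + Tsoft i l := by
      intro l
      rw [hThard]
      by_cases h : l = ℓ i
      · subst h
        rw [if_pos rfl, if_pos rfl, abs_of_nonneg (by linarith [hM i])]
        ring
      · rw [if_neg h, if_neg h, abs_of_nonpos (by linarith [hT_nonneg i l])]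
        ring
    rw [Finset.sum_congr rfl fun l _ => h1 l, Finset.sum_add_distrib,
      Finset.sum_ite_eq' univ (ℓ i) (fun l => μ i - 2 * Tsoft i l),
      if_pos (mem_univ _), hT_row i]
    ring
  -- total deviation bound
  have hS : ∑ i, ∑ l, |Thard i l - Tsoft i l| ≤ 2 * (1 - 1 / (k : ℝ)) := by
    calc ∑ i, ∑ l, |Thard i l - Tsoft i l| = ∑ i, 2 * (μ i - Tsoft i (ℓ i)) :=
          Finset.sum_congr rfl fun i _ => hrow i
    _ ≤ ∑ i, 2 * (1 - 1 / (k : ℝ)) * μ i := by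
          refine Finset.sum_le_sum fun i _ => ?_
          have h3 : μ i / k ≤ Tsoft i (ℓ i) := by
            rw [div_le_iff₀ hk0]; linarith [hkM i]
          have h4 : 2 * (1 - 1 / (k : ℝ)) * μ i = 2 * (μ i - μ i / k) := by
            field_simp
          linarith
    _ = 2 * (1 - 1 / (k : ℝ)) := by rw [← Finset.mul_sum, hμ_sum, mul_one]
  -- total masses
  have hThsum : ∑ i, ∑ l, Thard i l = 1 := by
    have : ∀ i, ∑ l, Thard i l = μ i := by
      intro i
      rw [Finset.sum_congr rfl fun l _ => hThard i l,
        Finset.sum_ite_eq' univ (ℓ i) (fun _ => μ i), if_pos (mem_univ _)]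
    rw [Finset.sum_congr rfl fun i _ => this i, hμ_sum]
  have hTssum : ∑ i, ∑ l, Tsoft i l = 1 := by
    rw [Finset.sum_congr rfl fun i _ => hT_row i, hμ_sum]
  -- linear term bound
  have hlin : (∑ i, ∑ l, dist (v i) (Bsoft l) ^ q * Thard i l)
      - (∑ i, ∑ l, dist (v i) (Bsoft l) ^ q * Tsoft i l)
      ≤ DA ^ q * (2 * (1 - 1 / (k : ℝ))) := by
    rw [← Finset.sum_sub_distrib]
    simp_rw [← Finset.sum_sub_distrib, ← mul_sub]
    calc ∑ i, ∑ l, dist (v i) (Bsoft l) ^ q * (Thard i l - Tsoft i l)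
        ≤ ∑ i, ∑ l, DA ^ q * |Thard i l - Tsoft i l| := by
          refine Finset.sum_le_sum fun i _ => Finset.sum_le_sum fun l _ => ?_
          have hd0 : (0:ℝ) ≤ dist (v i) (Bsoft l) := dist_nonneg
          have h1 : dist (v i) (Bsoft l) ^ q ≤ DA ^ q :=
            Real.rpow_le_rpow hd0 (hDAle i l) hq0
          have h2 : 0 ≤ dist (v i) (Bsoft l) ^ q := Real.rpow_nonneg hd0 q
          calc dist (v i) (Bsoft l) ^ q * (Thard i l - Tsoft i l)
              ≤ dist (v i) (Bsoft l) ^ q * |Thard i l - Tsoft i l| :=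
                mul_le_mul_of_nonneg_left (le_abs_self _) h2
          _ ≤ DA ^ q * |Thard i l - Tsoft i l| :=
                mul_le_mul_of_nonneg_right h1 (abs_nonneg _)
    _ = DA ^ q * ∑ i, ∑ l, |Thard i l - Tsoft i l| := by
          simp_rw [← Finset.mul_sum]
    _ ≤ DA ^ q * (2 * (1 - 1 / (k : ℝ))) := mul_le_mul_of_nonneg_left hS hDAq0
  -- quadratic term bound
  have hquad : (∑ i, ∑ j, ∑ l, ∑ m, |R1 i j - R2 l m| ^ q * (Thard i l * Thard j m))
      - (∑ i, ∑ j, ∑ l, ∑ m, |R1 i j - R2 l m| ^ q * (Tsoft i l * Tsoft j m))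
      ≤ 2 * DS ^ q * (2 * (1 - 1 / (k : ℝ))) := by
    rw [← Finset.sum_sub_distrib]
    simp_rw [← Finset.sum_sub_distrib, ← mul_sub]
    have step : ∑ i, ∑ j, ∑ l, ∑ m, |R1 i j - R2 l m| ^ q *
          (Thard i l * Thard j m - Tsoft i l * Tsoft j m)
        ≤ ∑ i, ∑ j, ∑ l, ∑ m, DS ^ q *
          (Thard i l * |Thard j m - Tsoft j m| + |Thard i l - Tsoft i l| * Tsoft j m) := by
      refine Finset.sum_le_sum fun i _ => Finset.sum_le_sum fun j _ =>
        Finset.sum_le_sum fun l _ => Finset.sum_le_sum fun m _ => ?_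
      have hc0 : (0:ℝ) ≤ |R1 i j - R2 l m| ^ q := Real.rpow_nonneg (abs_nonneg _) q
      have hc1 : |R1 i j - R2 l m| ^ q ≤ DS ^ q :=
        Real.rpow_le_rpow (abs_nonneg _) (hDSle i j l m) hq0
      have hinner : Thard i l * Thard j m - Tsoft i l * Tsoft j m
          ≤ Thard i l * |Thard j m - Tsoft j m| + |Thard i l - Tsoft i l| * Tsoft j m := by
        have e1 : Thard i l * (Thard j m - Tsoft j m)
            ≤ Thard i l * |Thard j m - Tsoft j m| :=
          mul_le_mul_of_nonneg_left (le_abs_self _) (hTh_nonneg i l)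
        have e2 : (Thard i l - Tsoft i l) * Tsoft j m
            ≤ |Thard i l - Tsoft i l| * Tsoft j m :=
          mul_le_mul_of_nonneg_right (le_abs_self _) (hT_nonneg j m)
        nlinarith [e1, e2]
      have hinner0 : 0 ≤ Thard i l * |Thard j m - Tsoft j m|
          + |Thard i l - Tsoft i l| * Tsoft j m := by
        have := mul_nonneg (hTh_nonneg i l) (abs_nonneg (Thard j m - Tsoft j m))
        have := mul_nonneg (abs_nonneg (Thard i l - Tsoft i l)) (hT_nonneg j m)
        linarith
      calc |R1 i j - R2 l m| ^ q * (Thard i l * Thard j m - Tsoft i l * Tsoft j m)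
          ≤ |R1 i j - R2 l m| ^ q *
            (Thard i l * |Thard j m - Tsoft j m| + |Thard i l - Tsoft i l| * Tsoft j m) :=
            mul_le_mul_of_nonneg_left hinner hc0
      _ ≤ DS ^ q *
            (Thard i l * |Thard j m - Tsoft j m| + |Thard i l - Tsoft i l| * Tsoft j m) :=
            mul_le_mul_of_nonneg_right hc1 hinner0
    calc ∑ i, ∑ j, ∑ l, ∑ m, |R1 i j - R2 l m| ^ q *
          (Thard i l * Thard j m - Tsoft i l * Tsoft j m)
        ≤ ∑ i, ∑ j, ∑ l, ∑ m, DS ^ q *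
          (Thard i l * |Thard j m - Tsoft j m| + |Thard i l - Tsoft i l| * Tsoft j m) := step
    _ = DS ^ q * ((∑ i, ∑ l, Thard i l) * (∑ j, ∑ m, |Thard j m - Tsoft j m|))
          + DS ^ q * ((∑ i, ∑ l, |Thard i l - Tsoft i l|) * (∑ j, ∑ m, Tsoft j m)) := by
          simp_rw [mul_add, Finset.sum_add_distrib]
          rw [foursum' (DS ^ q) Thard (fun j m => |Thard j m - Tsoft j m|),
            foursum' (DS ^ q) (fun i l => |Thard i l - Tsoft i l|) Tsoft]
    _ = 2 * DS ^ q * (∑ i, ∑ l, |Thard i l - Tsoft i l|) := by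
          rw [hThsum, hTssum]; ring
    _ ≤ 2 * DS ^ q * (2 * (1 - 1 / (k : ℝ))) := by nlinarith [hS, hDSq0]
  -- put everything together
  have key : srFGWloss α q v R1 R2 Thard Bsoft - srFGWloss α q v R1 R2 Tsoft Bsoft ≤
      2 * ((1 - α) * DA ^ q + 2 * α * DS ^ q) * (1 - 1 / (k : ℝ)) := by
    unfold srFGWloss
    have h1 : 0 ≤ 1 - α := by linarith
    nlinarith [mul_le_mul_of_nonneg_left hlin h1, mul_le_mul_of_nonneg_left hquad hα0]
  linarith [hB_opt, key]
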